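/- Suppose α, β, γ, δ, ε, κ satisfy the Riccati-type system with c₀ = 0: α' + b + 2cα + 4aα² = 0, β' + (c + 4aα)β = 0, γ' + aβ² = 0, δ' + (c + 4aα)δ = f + 2gα, ε' = (g − 2aδ)β, κ' = gδ − aδ². Then K(x,y,t) = μ(t)^{-1/2} exp(i(αx² + βxy + γy² + δx + εy + κ)) satisfies, for each fixed y ∈ ℝ, the Schrödinger equation iK_t = −aK_xx + bx²K − icxK_x − idK − fxK + igK_x, where μ'/μ = 4aα + 2d and μ > 0. -/

import Mathlib

open Complex

/-- if `α, β, γ, δ, ε, κ` satisfy the Riccati-type system (`c₀ = 0`),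
then `K(x,y,t) = μ^{-1/2} e^{i(αx² + βxy + γy² + δx + εy + κ)}` solves, for each
fixed `y`, the generalized driven harmonic oscillator Schrödinger equation. -/
theorem kernel_solves_schroedinger
    (a b c d f g : ℝ → ℝ) (ha : ∀ t, a t ≠ 0)
    (α β γ δ ε κ μ : ℝ → ℝ)
    (haD : Differentiable ℝ a) (hbD : Differentiable ℝ b) (hcD : Differentiable ℝ c)
    (hdD : Differentiable ℝ d) (hfD : Differentiable ℝ f) (hgD : Differentiable ℝ g)
    (hαD : Differentiable ℝ α) (hβD : Differentiable ℝ β) (hγD : Differentiable ℝ γ)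
    (hδD : Differentiable ℝ δ) (hεD : Differentiable ℝ ε) (hκD : Differentiable ℝ κ)
    (hμD : Differentiable ℝ μ) (hμpos : ∀ t, 0 < μ t)
    -- the Riccati-type system (c₀ = 0)
    (hSysA : ∀ t, deriv α t + b t + 2 * c t * α t + 4 * a t * (α t) ^ 2 = 0)
    (hSysB : ∀ t, deriv β t + (c t + 4 * a t * α t) * β t = 0)
    (hSysC : ∀ t, deriv γ t + a t * (β t) ^ 2 = 0)
    (hSysD : ∀ t, deriv δ t + (c t + 4 * a t * α t) * δ t = f t + 2 * g t * α t)
    (hSysE : ∀ t, deriv ε t = (g t - 2 * a t * δ t) * β t)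
    (hSysF : ∀ t, deriv κ t = g t * δ t - a t * (δ t) ^ 2)
    (hμα : ∀ t, deriv μ t / μ t = 4 * a t * α t + 2 * d t)
    (K : ℝ → ℝ → ℝ → ℂ)
    (hK : ∀ x y t, K x y t = (Real.sqrt (μ t) : ℂ)⁻¹
      * Complex.exp (Complex.I * ((α t : ℂ) * x ^ 2 + (β t : ℂ) * x * y
          + (γ t : ℂ) * y ^ 2 + (δ t : ℂ) * x + (ε t : ℂ) * y + (κ t : ℂ)))) :
    ∀ (y : ℝ) (x t : ℝ),
      Complex.I * deriv (fun s => K x y s) t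
        = -(a t : ℂ) * deriv (deriv (fun u => K u y t)) x
          + (b t : ℂ) * (x : ℂ) ^ 2 * K x y t
          - Complex.I * (c t : ℂ) * (x : ℂ) * deriv (fun u => K u y t) x
          - Complex.I * (d t : ℂ) * K x y t
          - (f t : ℂ) * (x : ℂ) * K x y t
          + Complex.I * (g t : ℂ) * deriv (fun u => K u y t) x := by
  intro y x t
  have hμt := hμpos t
  have hμne : μ t ≠ 0 := ne_of_gt hμt
  have hsqpos : 0 < Real.sqrt (μ t) := Real.sqrt_pos.mpr hμt
  have hsne : Real.sqrt (μ t) ≠ 0 := ne_of_gt hsqpos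
  have hsq : Real.sqrt (μ t) ^ 2 = μ t := Real.sq_sqrt (le_of_lt hμt)
  -- derivative values from the system
  have hα' : deriv α t = -(b t) - 2 * c t * α t - 4 * a t * (α t) ^ 2 := by
    have := hSysA t; linarith
  have hβ' : deriv β t = -((c t + 4 * a t * α t) * β t) := by
    have := hSysB t; linarith
  have hγ' : deriv γ t = -(a t * (β t) ^ 2) := by have := hSysC t; linarith
  have hδ' : deriv δ t = f t + 2 * g t * α t - (c t + 4 * a t * α t) * δ t := by
    have := hSysD t; linarith
  have hε' := hSysE t
  have hκ' := hSysF t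
  have hμ' : deriv μ t = (4 * a t * α t + 2 * d t) * μ t := by
    have h := hμα t
    field_simp at h
    linarith [h]
  -- spatial exponent derivative
  have hE : ∀ u : ℝ, HasDerivAt
      (fun u : ℝ => Complex.I * ((α t : ℂ) * (u : ℂ) ^ 2 + (β t : ℂ) * (u : ℂ) * (y : ℂ)
          + (γ t : ℂ) * (y : ℂ) ^ 2 + (δ t : ℂ) * (u : ℂ) + (ε t : ℂ) * (y : ℂ) + (κ t : ℂ)))
      (Complex.I * (2 * (α t : ℂ) * (u : ℂ) + (β t : ℂ) * (y : ℂ) + (δ t : ℂ))) u := by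
    intro u
    have hz : HasDerivAt
        (fun z : ℂ => Complex.I * ((α t : ℂ) * z ^ 2 + (β t : ℂ) * z * (y : ℂ)
            + (γ t : ℂ) * (y : ℂ) ^ 2 + (δ t : ℂ) * z + (ε t : ℂ) * (y : ℂ) + (κ t : ℂ)))
        (Complex.I * (2 * (α t : ℂ) * (u : ℂ) + (β t : ℂ) * (y : ℂ) + (δ t : ℂ))) (u : ℂ) := by
      have h1 : HasDerivAt (fun z : ℂ => z ^ 2) (2 * (u : ℂ)) (u : ℂ) := by
        simpa using hasDerivAt_pow 2 (u : ℂ)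
      have h2 : HasDerivAt (fun z : ℂ => z) 1 (u : ℂ) := hasDerivAt_id _
      have h := (((h1.const_mul (Complex.I * (α t : ℂ))).add
          (h2.const_mul (Complex.I * ((β t : ℂ) * (y : ℂ) + (δ t : ℂ))))).add_const
          (Complex.I * ((γ t : ℂ) * (y : ℂ) ^ 2 + (ε t : ℂ) * (y : ℂ) + (κ t : ℂ))))
      convert h using 1
      case e'_4 => rfl
      case e'_5 => rfl
      · funext z; simp only [Pi.add_apply]; ring
      · ring
    exact hz.comp_ofReal
  -- spatial derivative of K
  have hKx : ∀ u : ℝ, HasDerivAt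
      (fun u : ℝ => ((Real.sqrt (μ t) : ℂ))⁻¹
        * Complex.exp (Complex.I * ((α t : ℂ) * (u : ℂ) ^ 2 + (β t : ℂ) * (u : ℂ) * (y : ℂ)
          + (γ t : ℂ) * (y : ℂ) ^ 2 + (δ t : ℂ) * (u : ℂ) + (ε t : ℂ) * (y : ℂ) + (κ t : ℂ))))
      (Complex.I * (2 * (α t : ℂ) * (u : ℂ) + (β t : ℂ) * (y : ℂ) + (δ t : ℂ))
        * (((Real.sqrt (μ t) : ℂ))⁻¹
          * Complex.exp (Complex.I * ((α t : ℂ) * (u : ℂ) ^ 2 + (β t : ℂ) * (u : ℂ) * (y : ℂ)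
            + (γ t : ℂ) * (y : ℂ) ^ 2 + (δ t : ℂ) * (u : ℂ) + (ε t : ℂ) * (y : ℂ) + (κ t : ℂ))))) u := by
    intro u
    have h := ((hE u).cexp).const_mul (((Real.sqrt (μ t) : ℂ))⁻¹)
    convert h using 1
    case e'_4 => rfl
    ring
  -- linear factor derivative
  have hg1 : HasDerivAt
      (fun u : ℝ => Complex.I * (2 * (α t : ℂ) * (u : ℂ) + (β t : ℂ) * (y : ℂ) + (δ t : ℂ)))
      (Complex.I * (2 * (α t : ℂ))) x := by
    have hz : HasDerivAt
        (fun z : ℂ => Complex.I * (2 * (α t : ℂ) * z + (β t : ℂ) * (y : ℂ) + (δ t : ℂ)))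
        (Complex.I * (2 * (α t : ℂ))) (x : ℂ) := by
      have h2 : HasDerivAt (fun z : ℂ => z) 1 (x : ℂ) := hasDerivAt_id _
      have h := (h2.const_mul (Complex.I * (2 * (α t : ℂ)))).add_const
        (Complex.I * ((β t : ℂ) * (y : ℂ) + (δ t : ℂ)))
      convert h using 1
      case e'_4 => rfl
      case e'_5 => rfl
      · funext z; ring
      · ring
    exact hz.comp_ofReal
  -- time derivative: sqrt part
  have hsqrt : HasDerivAt (fun s : ℝ => (Real.sqrt (μ s))⁻¹)
      (-((2 * a t * α t + d t) * (Real.sqrt (μ t))⁻¹)) t := by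
    have h1 : HasDerivAt (fun s : ℝ => Real.sqrt (μ s))
        (1 / (2 * Real.sqrt (μ t)) * deriv μ t) t :=
      (Real.hasDerivAt_sqrt hμne).comp t (hμD t).hasDerivAt
    have h2 := h1.inv hsne
    convert h2 using 1
    case e'_4 => rfl
    case e'_5 => rfl
    case e'_8 => rfl
    rw [hμ', ← hsq]
    field_simp
    simp only [hsq]
    ring
  have hsqrtC : HasDerivAt (fun s : ℝ => ((Real.sqrt (μ s) : ℂ))⁻¹)
      ((-((2 * a t * α t + d t) * (Real.sqrt (μ t))⁻¹) : ℝ) : ℂ) t := by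
    have := hsqrt.ofReal_comp
    simpa [Complex.ofReal_inv] using this
  -- time derivative: exponent part
  have hΦ : HasDerivAt
      (fun s : ℝ => Complex.I * ((α s : ℂ) * (x : ℂ) ^ 2 + (β s : ℂ) * (x : ℂ) * (y : ℂ)
          + (γ s : ℂ) * (y : ℂ) ^ 2 + (δ s : ℂ) * (x : ℂ) + (ε s : ℂ) * (y : ℂ) + (κ s : ℂ)))
      (Complex.I * (((deriv α t : ℝ) : ℂ) * (x : ℂ) ^ 2 + ((deriv β t : ℝ) : ℂ) * (x : ℂ) * (y : ℂ)
          + ((deriv γ t : ℝ) : ℂ) * (y : ℂ) ^ 2 + ((deriv δ t : ℝ) : ℂ) * (x : ℂ) + ((deriv ε t : ℝ) : ℂ) * (y : ℂ)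
          + ((deriv κ t : ℝ) : ℂ))) t := by
    have hA := ((hαD t).hasDerivAt).ofReal_comp.mul_const ((x : ℂ) ^ 2)
    have hB : HasDerivAt (fun s : ℝ => (β s : ℂ) * (x : ℂ) * (y : ℂ))
        (((deriv β t : ℝ) : ℂ) * (x : ℂ) * (y : ℂ)) t := by
      have := ((hβD t).hasDerivAt).ofReal_comp.mul_const ((x : ℂ) * (y : ℂ))
      simpa [mul_assoc] using this
    have hC := ((hγD t).hasDerivAt).ofReal_comp.mul_const ((y : ℂ) ^ 2)
    have hD := ((hδD t).hasDerivAt).ofReal_comp.mul_const ((x : ℂ))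
    have hEe := ((hεD t).hasDerivAt).ofReal_comp.mul_const ((y : ℂ))
    have hKk := ((hκD t).hasDerivAt).ofReal_comp
    exact (((((hA.add hB).add hC).add hD).add hEe).add hKk).const_mul Complex.I
  have hKt : HasDerivAt
      (fun s : ℝ => ((Real.sqrt (μ s) : ℂ))⁻¹
        * Complex.exp (Complex.I * ((α s : ℂ) * (x : ℂ) ^ 2 + (β s : ℂ) * (x : ℂ) * (y : ℂ)
          + (γ s : ℂ) * (y : ℂ) ^ 2 + (δ s : ℂ) * (x : ℂ) + (ε s : ℂ) * (y : ℂ) + (κ s : ℂ))))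
      (((-((2 * a t * α t + d t) * (Real.sqrt (μ t))⁻¹) : ℝ) : ℂ)
          * Complex.exp (Complex.I * ((α t : ℂ) * (x : ℂ) ^ 2 + (β t : ℂ) * (x : ℂ) * (y : ℂ)
            + (γ t : ℂ) * (y : ℂ) ^ 2 + (δ t : ℂ) * (x : ℂ) + (ε t : ℂ) * (y : ℂ) + (κ t : ℂ)))
        + ((Real.sqrt (μ t) : ℂ))⁻¹
          * (Complex.exp (Complex.I * ((α t : ℂ) * (x : ℂ) ^ 2 + (β t : ℂ) * (x : ℂ) * (y : ℂ)
              + (γ t : ℂ) * (y : ℂ) ^ 2 + (δ t : ℂ) * (x : ℂ) + (ε t : ℂ) * (y : ℂ) + (κ t : ℂ)))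
            * (Complex.I * (((deriv α t : ℝ) : ℂ) * (x : ℂ) ^ 2 + ((deriv β t : ℝ) : ℂ) * (x : ℂ) * (y : ℂ)
              + ((deriv γ t : ℝ) : ℂ) * (y : ℂ) ^ 2 + ((deriv δ t : ℝ) : ℂ) * (x : ℂ)
              + ((deriv ε t : ℝ) : ℂ) * (y : ℂ) + ((deriv κ t : ℝ) : ℂ))))) t :=
    hsqrtC.mul hΦ.cexp
  simp only [hK]
  rw [hKt.deriv]
  have hF1 : (deriv fun u : ℝ => ((Real.sqrt (μ t) : ℂ))⁻¹
      * Complex.exp (Complex.I * ((α t : ℂ) * (u : ℂ) ^ 2 + (β t : ℂ) * (u : ℂ) * (y : ℂ)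
        + (γ t : ℂ) * (y : ℂ) ^ 2 + (δ t : ℂ) * (u : ℂ) + (ε t : ℂ) * (y : ℂ) + (κ t : ℂ))))
      = fun u : ℝ => Complex.I * (2 * (α t : ℂ) * (u : ℂ) + (β t : ℂ) * (y : ℂ) + (δ t : ℂ))
        * (((Real.sqrt (μ t) : ℂ))⁻¹
          * Complex.exp (Complex.I * ((α t : ℂ) * (u : ℂ) ^ 2 + (β t : ℂ) * (u : ℂ) * (y : ℂ)
            + (γ t : ℂ) * (y : ℂ) ^ 2 + (δ t : ℂ) * (u : ℂ) + (ε t : ℂ) * (y : ℂ) + (κ t : ℂ)))) :=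
    funext fun u => (hKx u).deriv
  simp only [hF1]
  have hm := hg1.mul (hKx x)
  simp only [Pi.mul_def] at hm
  rw [hm.deriv]
  rw [hα', hβ', hγ', hδ', hε', hκ']
  push_cast
  ring_nf
  simp only [Complex.I_sq]
  ring
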